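/- Let a : (0,∞) → [0,∞) be measurable, let b be a daughter distribution function, and suppose there are l ≥ 0 and b₀ > 0 with n₀(x) ≤ b₀(1+x^l) for a.e. x > 0. Let m ≥ max{1, l} and let f : (0,∞) → [0,∞) be measurable with ∫₀^∞ a(y)(1+y^m) f(y) dy < ∞. Then ∫₀^∞ (1+x^m) (∫ₓ^∞ a(y) b(x,y) f(y) dy) dx = ∫₀^∞ a(y)(n_m(y)+n₀(y)) f(y) dy ≤ (1+2b₀) ∫₀^∞ a(y)(1+y^m) f(y) dy < ∞. -/

import Mathlib

open MeasureTheory Set Filter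
open scoped ENNReal

/-- `n_m(y) = ∫₀^y x^m b(x,y) dx` as a value in `[0,∞]`. -/
noncomputable def nL (b : ℝ → ℝ → ℝ) (m y : ℝ) : ℝ≥0∞ :=
  ∫⁻ x in Set.Ioo 0 y, ENNReal.ofReal (x ^ m * b x y)

lemma mass_lintegral (b : ℝ → ℝ → ℝ)
    (hb_nonneg : ∀ x y, 0 ≤ b x y) {y : ℝ} (hy : 0 < y)
    (hmass : ∫ x in Set.Ioo 0 y, x * b x y = y) :
    ∫⁻ x in Set.Ioo 0 y, ENNReal.ofReal (x * b x y) = ENNReal.ofReal y := by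
  have hint : IntegrableOn (fun x => x * b x y) (Set.Ioo 0 y) := by
    by_contra h
    rw [MeasureTheory.integral_undef h] at hmass
    exact hy.ne hmass
  have hpos : 0 ≤ᵐ[volume.restrict (Set.Ioo 0 y)] fun x => x * b x y := by
    filter_upwards [self_mem_ae_restrict measurableSet_Ioo] with x hx
    exact mul_nonneg hx.1.le (hb_nonneg x y)
  rw [← MeasureTheory.ofReal_integral_eq_lintegral_ofReal hint hpos, hmass]

lemma nL_m_bound (b : ℝ → ℝ → ℝ) (hb_meas : Measurable (Function.uncurry b))
    (hb_nonneg : ∀ x y, 0 ≤ b x y) {m y : ℝ} (hm : 1 ≤ m) (hy : 0 < y)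
    (hmass : ∫ x in Set.Ioo 0 y, x * b x y = y) :
    nL b m y ≤ ENNReal.ofReal (y ^ m) := by
  have hbm : Measurable fun x => b x y :=
    (hb_meas.comp (measurable_id.prodMk measurable_const))
  have step : nL b m y ≤ ∫⁻ x in Set.Ioo 0 y,
      ENNReal.ofReal (y ^ (m - 1)) * ENNReal.ofReal (x * b x y) := by
    refine setLIntegral_mono_ae
      ((measurable_const.mul ((measurable_id.mul hbm).ennreal_ofReal)).aemeasurable) ?_
    refine ae_of_all _ fun x hx => ?_
    rw [← ENNReal.ofReal_mul (Real.rpow_nonneg hy.le _)]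
    refine ENNReal.ofReal_le_ofReal ?_
    have hxm : x ^ m = x ^ (m - 1) * x := by
      rw [← Real.rpow_add_one hx.1.ne']; ring_nf
    rw [hxm]
    have h1 : x ^ (m - 1) ≤ y ^ (m - 1) :=
      Real.rpow_le_rpow hx.1.le hx.2.le (by linarith)
    nlinarith [mul_nonneg hx.1.le (hb_nonneg x y), hb_nonneg x y, hx.1.le]
  calc nL b m y ≤ _ := step
    _ = ENNReal.ofReal (y ^ (m - 1)) * ∫⁻ x in Set.Ioo 0 y, ENNReal.ofReal (x * b x y) :=
        lintegral_const_mul' _ _ ENNReal.ofReal_ne_top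
    _ = ENNReal.ofReal (y ^ (m - 1)) * ENNReal.ofReal y := by
        rw [mass_lintegral b hb_nonneg hy hmass]
    _ = ENNReal.ofReal (y ^ m) := by
        rw [← ENNReal.ofReal_mul (Real.rpow_nonneg hy.le _)]
        congr 1
        rw [← Real.rpow_add_one hy.ne' (m - 1)]; ring_nf

theorem stmt5 (a : ℝ → ℝ) (b : ℝ → ℝ → ℝ) (l b₀ m : ℝ) (f : ℝ → ℝ)
    (ha_meas : Measurable a) (ha_nonneg : ∀ x, 0 ≤ a x)
    (hb_meas : Measurable (Function.uncurry b))
    (hb_nonneg : ∀ x y, 0 ≤ b x y)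
    (hb_supp : ∀ y : ℝ, 0 < y → ∀ᵐ x ∂(volume : Measure ℝ), y < x → b x y = 0)
    (hb_mass : ∀ y : ℝ, 0 < y → ∫ x in Set.Ioo 0 y, x * b x y = y)
    (hl : 0 ≤ l) (hb₀ : 0 < b₀)
    (hn0 : ∀ᵐ x ∂(volume.restrict (Set.Ioi (0:ℝ))),
      nL b 0 x ≤ ENNReal.ofReal (b₀ * (1 + x ^ l)))
    (hm : max 1 l ≤ m)
    (hf_meas : Measurable f) (hf_nonneg : ∀ x, 0 ≤ f x)
    (hf_int : ∫⁻ y in Set.Ioi (0:ℝ), ENNReal.ofReal (a y * (1 + y ^ m) * f y) < ∞) :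
    (∫⁻ x in Set.Ioi (0:ℝ), ENNReal.ofReal (1 + x ^ m) *
        ∫⁻ y in Set.Ioi x, ENNReal.ofReal (a y * b x y * f y))
      = (∫⁻ y in Set.Ioi (0:ℝ),
          ENNReal.ofReal (a y) * (nL b m y + nL b 0 y) * ENNReal.ofReal (f y)) ∧
    (∫⁻ y in Set.Ioi (0:ℝ),
        ENNReal.ofReal (a y) * (nL b m y + nL b 0 y) * ENNReal.ofReal (f y))
      ≤ ENNReal.ofReal (1 + 2 * b₀) *
          ∫⁻ y in Set.Ioi (0:ℝ), ENNReal.ofReal (a y * (1 + y ^ m) * f y) ∧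
    ENNReal.ofReal (1 + 2 * b₀) *
        (∫⁻ y in Set.Ioi (0:ℝ), ENNReal.ofReal (a y * (1 + y ^ m) * f y)) < ∞ := by
  have hm1 : (1:ℝ) ≤ m := le_trans (le_max_left 1 l) hm
  have hlm : l ≤ m := le_trans (le_max_right 1 l) hm
  set μ := volume.restrict (Set.Ioi (0:ℝ)) with hμdef
  set K : ℝ × ℝ → ℝ≥0∞ := fun p =>
    {q : ℝ × ℝ | q.1 < q.2}.indicator
      (fun q => ENNReal.ofReal (1 + q.1 ^ m) *
        ENNReal.ofReal (a q.2 * b q.1 q.2 * f q.2)) p with hKdef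
  have hKmeas : Measurable K := by
    refine Measurable.indicator ?_ (measurableSet_lt measurable_fst measurable_snd)
    refine Measurable.mul (measurable_const.add (measurable_fst.pow_const m)).ennreal_ofReal ?_
    exact (((ha_meas.comp measurable_snd).mul hb_meas).mul
      (hf_meas.comp measurable_snd)).ennreal_ofReal
  -- Step 1: the main equality
  have hEq : (∫⁻ x in Set.Ioi (0:ℝ), ENNReal.ofReal (1 + x ^ m) *
        ∫⁻ y in Set.Ioi x, ENNReal.ofReal (a y * b x y * f y))
      = (∫⁻ y in Set.Ioi (0:ℝ),
          ENNReal.ofReal (a y) * (nL b m y + nL b 0 y) * ENNReal.ofReal (f y)) := by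
    have stepA : (∫⁻ x in Set.Ioi (0:ℝ), ENNReal.ofReal (1 + x ^ m) *
          ∫⁻ y in Set.Ioi x, ENNReal.ofReal (a y * b x y * f y))
        = ∫⁻ x, (∫⁻ y, K (x, y) ∂μ) ∂μ := by
      refine lintegral_congr_ae ?_
      filter_upwards [self_mem_ae_restrict measurableSet_Ioi] with x hx
      have hKx : (fun y => K (x, y)) = (Set.Ioi x).indicator
          (fun y => ENNReal.ofReal (1 + x ^ m) *
            ENNReal.ofReal (a y * b x y * f y)) := by
        ext y; simp [hKdef, Set.indicator_apply, Set.mem_Ioi]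
      rw [hKx, lintegral_indicator measurableSet_Ioi _, hμdef,
        Measure.restrict_restrict measurableSet_Ioi, Set.Ioi_inter_Ioi,
        max_eq_left (le_of_lt hx), lintegral_const_mul' _ _ ENNReal.ofReal_ne_top]
    have stepB : (∫⁻ x, (∫⁻ y, K (x, y) ∂μ) ∂μ) = ∫⁻ y, (∫⁻ x, K (x, y) ∂μ) ∂μ := by
      exact lintegral_lintegral_swap
        (hKmeas.comp (measurable_fst.prodMk measurable_snd)).aemeasurable
    have stepC : (∫⁻ y, (∫⁻ x, K (x, y) ∂μ) ∂μ)
        = ∫⁻ y in Set.Ioi (0:ℝ),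
            ENNReal.ofReal (a y) * (nL b m y + nL b 0 y) * ENNReal.ofReal (f y) := by
      refine lintegral_congr_ae ?_
      filter_upwards [self_mem_ae_restrict measurableSet_Ioi] with y hy
      have hKy : (fun x => K (x, y)) = (Set.Iio y).indicator
          (fun x => ENNReal.ofReal (1 + x ^ m) *
            ENNReal.ofReal (a y * b x y * f y)) := by
        ext x; simp [hKdef, Set.indicator_apply, Set.mem_Iio]
      rw [hKy, lintegral_indicator measurableSet_Iio _, hμdef,
        Measure.restrict_restrict measurableSet_Iio]
      have hset : Set.Iio y ∩ Set.Ioi 0 = Set.Ioo 0 y := by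
        ext x; simp [Set.mem_Ioo, Set.mem_Iio, Set.mem_Ioi, and_comm]
      rw [hset]
      have hpt : ∀ x ∈ Set.Ioo (0:ℝ) y,
          ENNReal.ofReal (1 + x ^ m) * ENNReal.ofReal (a y * b x y * f y)
          = (ENNReal.ofReal (a y) * ENNReal.ofReal (f y)) *
            (ENNReal.ofReal (x ^ (0:ℝ) * b x y) + ENNReal.ofReal (x ^ m * b x y)) := by
        intro x hx
        rw [Real.rpow_zero, one_mul,
          ← ENNReal.ofReal_add (hb_nonneg x y)
            (mul_nonneg (Real.rpow_nonneg hx.1.le m) (hb_nonneg x y)),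
          ← ENNReal.ofReal_mul (ha_nonneg y),
          ← ENNReal.ofReal_mul (mul_nonneg (ha_nonneg y) (hf_nonneg y)),
          ← ENNReal.ofReal_mul (by nlinarith [Real.rpow_nonneg hx.1.le m] : (0:ℝ) ≤ 1 + x ^ m)]
        congr 1; ring
      rw [setLIntegral_congr_fun measurableSet_Ioo hpt]
      have hbm : Measurable fun x => b x y :=
        hb_meas.comp (measurable_id.prodMk measurable_const)
      rw [lintegral_const_mul' _ _
        (ENNReal.mul_ne_top ENNReal.ofReal_ne_top ENNReal.ofReal_ne_top),
        lintegral_add_left (f := fun x : ℝ => ENNReal.ofReal (x ^ (0:ℝ) * b x y))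
          (((by fun_prop : Measurable fun x : ℝ => x ^ (0:ℝ)).mul
          hbm).ennreal_ofReal)]
      show ENNReal.ofReal (a y) * ENNReal.ofReal (f y) * (nL b 0 y + nL b m y) = _
      ring
    rw [stepA, stepB, stepC]
  refine ⟨hEq, ?_, ?_⟩
  · -- Step 2: the bound
    have key : ∀ᵐ y ∂μ,
        ENNReal.ofReal (a y) * (nL b m y + nL b 0 y) * ENNReal.ofReal (f y)
        ≤ ENNReal.ofReal (1 + 2 * b₀) * ENNReal.ofReal (a y * (1 + y ^ m) * f y) := by
      filter_upwards [hn0, self_mem_ae_restrict measurableSet_Ioi] with y hy0 hy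
      have hym : (0:ℝ) ≤ y ^ m := Real.rpow_nonneg (le_of_lt hy) m
      have hyl : (0:ℝ) ≤ y ^ l := Real.rpow_nonneg (le_of_lt hy) l
      have hbound : nL b m y + nL b 0 y ≤ ENNReal.ofReal ((1 + 2 * b₀) * (1 + y ^ m)) := by
        have h1 : nL b m y ≤ ENNReal.ofReal (y ^ m) :=
          nL_m_bound b hb_meas hb_nonneg hm1 hy (hb_mass y hy)
        have h2 : nL b 0 y ≤ ENNReal.ofReal (b₀ * (1 + y ^ l)) := hy0
        calc nL b m y + nL b 0 y
            ≤ ENNReal.ofReal (y ^ m) + ENNReal.ofReal (b₀ * (1 + y ^ l)) :=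
              add_le_add h1 h2
          _ = ENNReal.ofReal (y ^ m + b₀ * (1 + y ^ l)) :=
              (ENNReal.ofReal_add hym (mul_nonneg hb₀.le (by linarith))).symm
          _ ≤ ENNReal.ofReal ((1 + 2 * b₀) * (1 + y ^ m)) := by
              refine ENNReal.ofReal_le_ofReal ?_
              have hyml : y ^ l ≤ 1 + y ^ m := by
                rcases le_or_gt y 1 with h | h
                · have : y ^ l ≤ 1 := Real.rpow_le_one (le_of_lt hy) h hl
                  linarith
                · have : y ^ l ≤ y ^ m :=
                    Real.rpow_le_rpow_of_exponent_le h.le hlm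
                  linarith
              nlinarith
      calc ENNReal.ofReal (a y) * (nL b m y + nL b 0 y) * ENNReal.ofReal (f y)
          ≤ ENNReal.ofReal (a y) * ENNReal.ofReal ((1 + 2 * b₀) * (1 + y ^ m)) *
            ENNReal.ofReal (f y) := mul_le_mul' (mul_le_mul' le_rfl hbound) le_rfl
        _ = ENNReal.ofReal (1 + 2 * b₀) * ENNReal.ofReal (a y * (1 + y ^ m) * f y) := by
            rw [← ENNReal.ofReal_mul (ha_nonneg y),
              ← ENNReal.ofReal_mul (mul_nonneg (ha_nonneg y) (mul_nonneg (by linarith) (by linarith))),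
              ← ENNReal.ofReal_mul (by linarith : (0:ℝ) ≤ 1 + 2 * b₀)]
            congr 1; ring
    calc (∫⁻ y in Set.Ioi (0:ℝ),
          ENNReal.ofReal (a y) * (nL b m y + nL b 0 y) * ENNReal.ofReal (f y))
        ≤ ∫⁻ y in Set.Ioi (0:ℝ),
            ENNReal.ofReal (1 + 2 * b₀) * ENNReal.ofReal (a y * (1 + y ^ m) * f y) :=
          lintegral_mono_ae key
      _ = ENNReal.ofReal (1 + 2 * b₀) *
            ∫⁻ y in Set.Ioi (0:ℝ), ENNReal.ofReal (a y * (1 + y ^ m) * f y) :=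
          lintegral_const_mul' _ _ ENNReal.ofReal_ne_top
  · exact ENNReal.mul_lt_top ENNReal.ofReal_lt_top hf_int
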